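/- For every infinite ordinal α, the ordinal space ω^α (ordinal exponentiation), equipped with its order topology, has cardinality |α| and is right-separated with ord_r(ω^α) ≥ α. -/

import Mathlib

universe u

open Cardinal Ordinal

/-- `o` is the order type of some right-separating well-ordering of `X`:
a well-ordering all of whose initial segments are open. -/
def IsRightSepType (X : Type u) [TopologicalSpace X] (o : Ordinal.{u}) : Prop :=
  ∃ (r : X → X → Prop) (hwo : IsWellOrder X r),
    (∀ x : X, IsOpen {y | r y x}) ∧ o = @Ordinal.type X r hwo

/-- A space is right-separated if it admits a right-separating well-ordering. -/
def IsRightSeparated (X : Type u) [TopologicalSpace X] : Prop :=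
  ∃ o, IsRightSepType X o

/-- The right-separating type of a space: the minimum of the order types of its
right-separating well-orderings. -/
noncomputable def ordR (X : Type u) [TopologicalSpace X] : Ordinal.{u} :=
  sInf {o | IsRightSepType X o}

lemma card_omega0_opow_le (α : Ordinal.{0}) :
    (Ordinal.omega0 ^ α).card ≤ max Cardinal.aleph0 α.card := by
  induction α using Ordinal.limitRecOn with
  | zero =>
    rw [opow_zero]
    exact le_trans (by norm_num) (le_max_left Cardinal.aleph0 _)
  | add_one γ IH =>
    rw [opow_add_one, Ordinal.card_mul, Ordinal.card_omega0]
    calc (Ordinal.omega0 ^ γ).card * Cardinal.aleph0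
        ≤ (max Cardinal.aleph0 γ.card) * Cardinal.aleph0 := mul_le_mul_left IH _
      _ = max Cardinal.aleph0 γ.card := by
          rw [Cardinal.mul_eq_max (le_max_left _ _) le_rfl,
            max_eq_left (le_max_left _ _)]
      _ ≤ max Cardinal.aleph0 (γ + 1).card :=
          max_le_max le_rfl (Ordinal.card_le_card ((Order.le_succ γ).trans_eq (Order.succ_eq_add_one γ)))
  | limit γ hγ IH =>
    rw [opow_limit omega0_ne_zero hγ]
    haveI : Nonempty (Set.Iio γ) := ⟨⟨0, hγ.bot_lt⟩⟩
    have hX : (⨆ a : Set.Iio γ, (Ordinal.omega0 ^ a.1).card) ≤ max Cardinal.aleph0 γ.card :=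
      ciSup_le' fun a => (IH a.1 a.2).trans (max_le_max le_rfl (Ordinal.card_le_card a.2.le))
    calc (⨆ a : Set.Iio γ, Ordinal.omega0 ^ a.1).card
        ≤ Cardinal.lift.{0} γ.card * ⨆ a : Set.Iio γ, (Ordinal.omega0 ^ a.1).card :=
          Ordinal.card_iSup_Iio_le_card_mul_iSup _
      _ ≤ (max Cardinal.aleph0 γ.card) * (max Cardinal.aleph0 γ.card) := by
          rw [Cardinal.lift_id]
          exact mul_le_mul' (le_max_right _ _) hX
      _ = max Cardinal.aleph0 γ.card := Cardinal.mul_eq_self (le_max_left _ _)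

theorem stmt_18 (α : Ordinal.{0}) (hα : Ordinal.omega0 ≤ α)
    (τ : TopologicalSpace (Ordinal.omega0 ^ α).ToType)
    (hτ : τ = Preorder.topology ((Ordinal.omega0 ^ α).ToType)) :
    #((Ordinal.omega0 ^ α).ToType) = α.card ∧
    @IsRightSeparated _ τ ∧ α ≤ @ordR _ τ := by
  subst hτ
  set X := (Ordinal.omega0 ^ α).ToType with hX
  letI : TopologicalSpace X := Preorder.topology X
  haveI : OrderTopology X := ⟨rfl⟩
  haveI hlt : IsWellOrder X (· < ·) := isWellOrder_lt
  have hcard : #X = α.card := by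
    rw [Cardinal.mk_toType]
    refine le_antisymm ((card_omega0_opow_le α).trans_eq ?_)
      (Ordinal.card_le_card (right_le_opow α one_lt_omega0))
    exact max_eq_right (Ordinal.aleph0_le_card.2 hα)
  -- the natural order right-separates
  have hnat : IsRightSepType X (Ordinal.omega0 ^ α) := by
    refine ⟨(· < ·), hlt, ?_, (Ordinal.type_toType _).symm⟩
    intro x
    have : {y : X | y < x} = Set.Iio x := rfl
    rw [this]
    exact isOpen_Iio
  refine ⟨hcard, ⟨_, hnat⟩, ?_⟩
  -- main lower bound
  refine le_csInf ⟨_, hnat⟩ ?_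
  rintro o ⟨r, hwo, hopen, rfl⟩
  haveI := hwo
  -- key claim
  have key : ∀ β : Ordinal, ∀ x : X,
      Ordinal.typein (α := X) (· < ·) x ≠ 0 →
      Ordinal.omega0 ^ β ∣ Ordinal.typein (α := X) (· < ·) x →
      β ≤ Ordinal.typein r x := by
    intro β
    induction β using Ordinal.limitRecOn with
    | zero => intro x _ _; exact zero_le
    | add_one γ IH =>
      intro x hx0 hdvd
      rw [Order.add_one_le_iff]
      by_contra hcon
      push_neg at hcon
      -- build an open set U = {y | ¬ r x y}
      have hU : IsOpen {y : X | ¬ r x y} := by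
        by_cases hmax : ∃ z, r x z
        · obtain ⟨z, hz⟩ := hmax
          have hzmin := hwo.wf.min_mem {z | r x z} ⟨z, hz⟩
          set m := hwo.wf.min {z | r x z} ⟨z, hz⟩ with hm
          have heq : {y : X | ¬ r x y} = {y | r y m} := by
            ext y
            constructor
            · intro hy
              rcases trichotomous_of r y x with h | h | h
              · exact trans_of r h hzmin
              · exact h ▸ hzmin
              · exact absurd h hy
            · intro hy hxy
              exact hwo.wf.not_lt_min {z | r x z} hxy hy
          rw [heq]
          exact hopen m
        · push_neg at hmax
          have : {y : X | ¬ r x y} = Set.univ := by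
            ext y; simp [hmax y]
          rw [this]
          exact isOpen_univ
      have hxU : x ∈ {y : X | ¬ r x y} := irrefl_of r x
      -- x is not minimal: there is l < x
      have hvx := Ordinal.typein_lt_self (o := Ordinal.omega0 ^ α) x
      set vx := Ordinal.typein (α := X) (· < ·) x with hvxdef
      have hvxpos : 0 < vx := pos_iff_ne_zero.2 hx0
      have h0lt : (0 : Ordinal) < Ordinal.type (α := X) (· < ·) := by
        rw [Ordinal.type_toType]
        exact lt_of_le_of_lt (zero_le) hvx
      set z0 : X := Ordinal.enum (α := X) (· < ·) ⟨0, h0lt⟩ with hz0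
      have hz0x : z0 < x := by
        have := Ordinal.typein_enum (α := X) (· < ·) h0lt
        rw [← Ordinal.typein_lt_typein (α := X) (· < ·), this]
        exact hvxpos
      obtain ⟨l, hlx, hsub⟩ :=
        exists_Ioc_subset_of_mem_nhds (hU.mem_nhds hxU) ⟨z0, hz0x⟩
      -- decompose vx
      obtain ⟨c, hc⟩ := hdvd
      have hc0 : c ≠ 0 := by
        rintro rfl
        rw [mul_zero] at hc
        exact hx0 hc
      have hvxeq : vx = Ordinal.omega0 ^ γ * (Ordinal.omega0 * c) := by
        rw [hc, opow_add_one, mul_assoc]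
      have hωc : Order.IsSuccLimit (Ordinal.omega0 * c) :=
        Ordinal.isSuccLimit_mul_left Ordinal.isSuccLimit_omega0 (pos_iff_ne_zero.2 hc0)
      have hla : Ordinal.typein (α := X) (· < ·) l < vx :=
        (Ordinal.typein_lt_typein (α := X) (· < ·)).2 hlx
      obtain ⟨d, hd, had⟩ := (Ordinal.lt_mul_iff_of_isSuccLimit hωc).1 (hvxeq ▸ hla)
      set w := Ordinal.omega0 ^ γ * d with hw
      have hwvx : w < vx := by
        rw [hvxeq]
        exact (mul_lt_mul_iff_right₀ (opow_pos γ omega0_pos)).2 hd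
      have hwα : w < Ordinal.type (α := X) (· < ·) := by
        rw [Ordinal.type_toType]
        exact hwvx.trans hvx
      set y : X := Ordinal.enum (α := X) (· < ·) ⟨w, hwα⟩ with hy
      have hyw : Ordinal.typein (α := X) (· < ·) y = w :=
        Ordinal.typein_enum (α := X) (· < ·) hwα
      have hyx : y < x := by
        rw [← Ordinal.typein_lt_typein (α := X) (· < ·), hyw]
        exact hwvx
      have hly : l < y := by
        rw [← Ordinal.typein_lt_typein (α := X) (· < ·), hyw]
        exact had
      have hyU : ¬ r x y := hsub ⟨hly, hyx.le⟩
      have hyne : y ≠ x := by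
        intro h
        rw [← hyw, h] at hwvx
        exact lt_irrefl _ hwvx
      have hryx : r y x := by
        rcases trichotomous_of r y x with h | h | h
        · exact h
        · exact absurd h hyne
        · exact absurd h hyU
      have hyγ : γ ≤ Ordinal.typein r y := by
        refine IH y ?_ ?_
        · rw [hyw]
          exact (lt_of_le_of_lt (zero_le) had).ne'
        · rw [hyw]
          exact ⟨d, rfl⟩
      have : Ordinal.typein r y < Ordinal.typein r x :=
        (Ordinal.typein_lt_typein r).2 hryx
      exact absurd (lt_of_le_of_lt hyγ this) (not_lt.2 hcon)
    | limit γ hγ IH =>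
      intro x hx0 hdvd
      refine le_of_forall_lt fun δ hδ => ?_
      have hsucc : Order.succ δ < γ := hγ.succ_lt hδ
      have := IH (Order.succ δ) hsucc x hx0
        (dvd_trans (opow_dvd_opow _ hsucc.le) hdvd)
      exact lt_of_lt_of_le (Order.lt_succ δ) this
  -- conclude
  refine le_of_forall_lt fun β hβ => ?_
  have hβα : Ordinal.omega0 ^ β < Ordinal.omega0 ^ α :=
    (opow_lt_opow_iff_right one_lt_omega0).2 hβ
  have hβα' : Ordinal.omega0 ^ β < Ordinal.type (α := X) (· < ·) := by
    rwa [Ordinal.type_toType]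
  set x : X := Ordinal.enum (α := X) (· < ·) ⟨Ordinal.omega0 ^ β, hβα'⟩ with hx
  have hxv : Ordinal.typein (α := X) (· < ·) x = Ordinal.omega0 ^ β :=
    Ordinal.typein_enum (α := X) (· < ·) hβα'
  have := key β x (by rw [hxv]; exact opow_ne_zero β omega0_ne_zero)
    (by rw [hxv])
  exact lt_of_le_of_lt this (Ordinal.typein_lt_type r x)
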